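/- Unbiasedness of the HNCA gradient estimator (Equations 1 and 3): in the single-unit factorized model with reward function r, the function t ↦ ∑_{b,φ,c} μ b * π t φ b * (∏_j κ j (c j) b φ) * r b c (the expected reward) has derivative at t = θ equal to ∑_{b,φ,c} p_θ (b, φ, c) * ((∑_{φ'} ρ φ' b c * g φ' b) * r b c), i.e. the expectation under p_θ of the HNCA estimator Ĝ^HNCA (b, c) = (∑_{φ'} ρ φ' b c * g φ' b) * r b c equals the derivative of the expected reward. -/

import Mathlib

/-- Unbiasedness of the HNCA gradient estimator (Equations 1 and 3): the expectation under
p_θ of the HNCA estimator (∑_{φ'} ρ_Φ(φ') ∂π(φ'|pa)/∂θ) · r equals the derivative of the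
expected reward. -/
theorem hnca_unbiased
    {n : ℕ} {B S : Type*} {C : Fin n → Type*}
    [Fintype B] [Fintype S] [Nonempty B] [Nonempty S]
    [∀ j, Fintype (C j)] [∀ j, Nonempty (C j)]
    (μ : B → ℝ) (π : ℝ → S → B → ℝ) (κ : (j : Fin n) → C j → B → S → ℝ) (θ : ℝ)
    (hμpos : ∀ b, 0 < μ b) (hμ1 : ∑ b, μ b = 1)
    (hπ0 : ∀ t φ b, 0 ≤ π t φ b) (hπ1 : ∀ t b, ∑ φ, π t φ b = 1)
    (hπpos : ∀ φ b, 0 < π θ φ b)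
    (hκpos : ∀ j cj b φ, 0 < κ j cj b φ) (hκ1 : ∀ j b φ, ∑ cj, κ j cj b φ = 1)
    (g : S → B → ℝ) (hg : ∀ φ b, HasDerivAt (fun t => π t φ b) (g φ b) θ)
    (r : B → (∀ j, C j) → ℝ) :
    HasDerivAt
      (fun t => ∑ b, ∑ φ, ∑ c : ∀ j, C j,
        μ b * π t φ b * (∏ j, κ j (c j) b φ) * r b c)
      (∑ b, ∑ φ, ∑ c : ∀ j, C j,
        (μ b * π θ φ b * ∏ j, κ j (c j) b φ) *
          ((∑ φ', ((∏ j, κ j (c j) b φ') /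
              (∑ φ'', π θ φ'' b * ∏ j, κ j (c j) b φ'')) * g φ' b) * r b c)) θ := by

  have hD : ∀ (b : B) (c : ∀ j, C j),
      0 < ∑ φ'', π θ φ'' b * ∏ j, κ j (c j) b φ'' := by
    intro b c
    apply Finset.sum_pos
    · intro φ _
      exact mul_pos (hπpos φ b) (Finset.prod_pos fun j _ => hκpos j (c j) b φ)
    · exact Finset.univ_nonempty
  have main : HasDerivAt
      (fun t => ∑ b, ∑ φ, ∑ c : ∀ j, C j,
        μ b * π t φ b * (∏ j, κ j (c j) b φ) * r b c)
      (∑ b, ∑ φ, ∑ c : ∀ j, C j,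
        μ b * g φ b * (∏ j, κ j (c j) b φ) * r b c) θ := by
    apply HasDerivAt.fun_sum; intro b _
    apply HasDerivAt.fun_sum; intro φ _
    apply HasDerivAt.fun_sum; intro c _
    exact (((hg φ b).const_mul (μ b)).mul_const _).mul_const _
  have key : (∑ b, ∑ φ, ∑ c : ∀ j, C j,
        (μ b * π θ φ b * ∏ j, κ j (c j) b φ) *
          ((∑ φ', ((∏ j, κ j (c j) b φ') /
              (∑ φ'', π θ φ'' b * ∏ j, κ j (c j) b φ'')) * g φ' b) * r b c))
      = ∑ b, ∑ φ, ∑ c : ∀ j, C j,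
        μ b * g φ b * (∏ j, κ j (c j) b φ) * r b c := by
    apply Finset.sum_congr rfl
    intro b _
    rw [Finset.sum_comm]
    conv_rhs => rw [Finset.sum_comm]
    apply Finset.sum_congr rfl
    intro c _
    have hDne : (∑ φ'', π θ φ'' b * ∏ j, κ j (c j) b φ'') ≠ 0 := (hD b c).ne'
    rw [← Finset.sum_mul]
    have h1 : ∑ φ, μ b * π θ φ b * ∏ j, κ j (c j) b φ
        = μ b * ∑ φ'', π θ φ'' b * ∏ j, κ j (c j) b φ'' := by
      rw [Finset.mul_sum]
      exact Finset.sum_congr rfl fun φ _ => by ring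
    rw [h1]
    have h2 : ∑ φ', ((∏ j, κ j (c j) b φ') /
        (∑ φ'', π θ φ'' b * ∏ j, κ j (c j) b φ'')) * g φ' b
        = (∑ φ', (∏ j, κ j (c j) b φ') * g φ' b) /
          (∑ φ'', π θ φ'' b * ∏ j, κ j (c j) b φ'') := by
      rw [Finset.sum_div]
      exact Finset.sum_congr rfl fun φ _ => by ring
    rw [h2]
    have h3 : ∑ φ, μ b * g φ b * (∏ j, κ j (c j) b φ) * r b c
        = μ b * (∑ φ', (∏ j, κ j (c j) b φ') * g φ' b) * r b c := by
      rw [Finset.mul_sum, Finset.sum_mul]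
      exact Finset.sum_congr rfl fun φ _ => by ring
    rw [h3]
    field_simp
  rw [key]
  exact main
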